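/- Let r_2, r_3, r_4, r_5 be pairwise coprime positive integers with r_2 odd. Then for any finite group G, the 5-tuple (3, 3r_2, 6r_3, 6r_4, 6r_5) is not G-harmonic; i.e. there do not exist subgroups U_1, U_2, U_3, U_4, U_5 of G with [G:U_1] = 3, [G:U_2] = 3r_2, and [G:U_j] = 6r_j for j = 3, 4, 5, and elements g_1, ..., g_5 ∈ G such that the cosets g_1U_1, ..., g_5U_5 are pairwise disjoint. -/

import Mathlib

open scoped Pointwise

namespace HSAux

variable {G : Type*} [Group G]

/-- Two left cosets intersect iff `a⁻¹ * b` lies in the product set. -/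
lemma not_disjoint_iff_mem_mul {U V : Subgroup G} {a b : G} :
    ¬ Disjoint (a • (U : Set G)) (b • (V : Set G)) ↔
      a⁻¹ * b ∈ (U : Set G) * (V : Set G) := by
  rw [Set.not_disjoint_iff]
  constructor
  · rintro ⟨x, hx1, hx2⟩
    rw [Set.mem_smul_set_iff_inv_smul_mem] at hx1 hx2
    refine ⟨a⁻¹ * x, hx1, (b⁻¹ * x)⁻¹, V.inv_mem hx2, by group⟩
  · rintro ⟨u, hu, v, hv, huv⟩
    have huv' : u * v = a⁻¹ * b := huv
    refine ⟨a * u, ⟨u, hu, rfl⟩, ?_⟩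
    have hx : a * u = b * v⁻¹ := by
      have hb : b = a * (u * v) := by rw [huv']; group
      rw [hb]; group
    exact ⟨v⁻¹, V.inv_mem hv, hx.symm⟩

lemma card_mul_inf [Finite G] (U V : Subgroup G) :
    Nat.card ((U : Set G) * (V : Set G)) * Nat.card (U ⊓ V : Subgroup G) =
      Nat.card U * Nat.card V := by
  classical
  have e : ((U ⧸ (U ⊓ V).subgroupOf U) × V) ≃ ((U : Set G) * (V : Set G) : Set G) := by
    refine Equiv.ofBijective
      (fun p => ⟨(p.1.out : G) * (p.2 : G),
        ⟨(p.1.out : G), p.1.out.2, (p.2 : G), p.2.2, rfl⟩⟩) ⟨?_, ?_⟩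
    · rintro ⟨q₁, v₁⟩ ⟨q₂, v₂⟩ h
      have h' : (q₁.out : G) * v₁ = (q₂.out : G) * v₂ := congrArg Subtype.val h
      have hv : (q₁.out : G)⁻¹ * (q₂.out : G) = (v₁ : G) * (v₂ : G)⁻¹ := by
        have h2 : (q₂.out : G) = (q₁.out : G) * ((v₁ : G) * (v₂ : G)⁻¹) := by
          rw [← mul_assoc, h']; group
        rw [h2]; group
      have hd : q₁.out⁻¹ * q₂.out ∈ (U ⊓ V).subgroupOf U := by
        rw [Subgroup.mem_subgroupOf]
        refine Subgroup.mem_inf.mpr ⟨?_, ?_⟩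
        · push_cast
          exact mul_mem (U.inv_mem q₁.out.2) q₂.out.2
        · have : ((q₁.out⁻¹ * q₂.out : U) : G) = (v₁ : G) * (v₂ : G)⁻¹ := by
            push_cast; exact hv
          rw [this]
          exact mul_mem v₁.2 (V.inv_mem v₂.2)
      have hq : q₁ = q₂ := by
        have h1 : ((q₁.out : U ⧸ (U ⊓ V).subgroupOf U)) = (q₂.out : U ⧸ (U ⊓ V).subgroupOf U) :=
          (QuotientGroup.eq (s := (U ⊓ V).subgroupOf U)).mpr hd
        rwa [QuotientGroup.out_eq', QuotientGroup.out_eq'] at h1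
      subst hq
      have hvv : v₁ = v₂ := Subtype.ext (mul_left_cancel h')
      rw [hvv]
    · rintro ⟨x, hx⟩
      obtain ⟨u, hu, v, hv, huv⟩ := hx
      have huv' : u * v = x := huv
      set q : U ⧸ (U ⊓ V).subgroupOf U := QuotientGroup.mk ⟨u, hu⟩ with hq
      have hd : q.out⁻¹ * (⟨u, hu⟩ : U) ∈ (U ⊓ V).subgroupOf U := by
        refine (QuotientGroup.eq (s := (U ⊓ V).subgroupOf U)).mp ?_
        rw [hq, QuotientGroup.out_eq']
      have hdV : ((q.out⁻¹ * (⟨u, hu⟩ : U) : U) : G) ∈ V :=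
        (Subgroup.mem_inf.mp (Subgroup.mem_subgroupOf.mp hd)).2
      refine ⟨⟨q, ⟨((q.out⁻¹ * (⟨u, hu⟩ : U) : U) : G) * v, V.mul_mem hdV hv⟩⟩, ?_⟩
      apply Subtype.ext
      show (q.out : G) * (((q.out⁻¹ * (⟨u, hu⟩ : U) : U) : G) * v) = x
      push_cast
      rw [← huv']
      group
  have hcard : Nat.card ((U : Set G) * (V : Set G) : Set G) =
      ((U ⊓ V).subgroupOf U).index * Nat.card V := by
    rw [← Nat.card_congr e, Nat.card_prod, Subgroup.index_eq_card]
  have hXcard : Nat.card ((U ⊓ V).subgroupOf U) = Nat.card (U ⊓ V : Subgroup G) :=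
    Nat.card_congr (Subgroup.subgroupOfEquivOfLe inf_le_left).toEquiv
  calc Nat.card ((U : Set G) * (V : Set G) : Set G) * Nat.card (U ⊓ V : Subgroup G)
      = ((U ⊓ V).subgroupOf U).index * Nat.card ((U ⊓ V).subgroupOf U) * Nat.card V := by
        rw [hcard, hXcard]; ring
    _ = Nat.card U * Nat.card V := by rw [Subgroup.index_mul_card]

lemma prod_card_le [Finite G] (U V : Subgroup G) :
    Nat.card ((U : Set G) * (V : Set G)) ≤ Nat.card G := by
  rw [Nat.card_coe_set_eq, ← Set.ncard_univ G]
  exact Set.ncard_le_ncard (Set.subset_univ _) Set.finite_univ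

lemma dagger [Finite G] (U V : Subgroup G) :
    Nat.card ((U : Set G) * (V : Set G)) * (U.index * V.index) =
      Nat.card G * (U ⊓ V).index := by
  have h1 := card_mul_inf U V
  have h2 : Nat.card (U ⊓ V : Subgroup G) ≠ 0 := Nat.card_pos.ne'
  apply Nat.eq_of_mul_eq_mul_right (Nat.pos_of_ne_zero h2)
  calc Nat.card ((U : Set G) * (V : Set G)) * (U.index * V.index) *
        Nat.card (U ⊓ V : Subgroup G)
      = (Nat.card ((U : Set G) * (V : Set G)) * Nat.card (U ⊓ V : Subgroup G)) *
        (U.index * V.index) := by ring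
    _ = (Nat.card U * Nat.card V) * (U.index * V.index) := by rw [h1]
    _ = (U.index * Nat.card U) * (V.index * Nat.card V) := by ring
    _ = Nat.card G * Nat.card G := by rw [Subgroup.index_mul_card, Subgroup.index_mul_card]
    _ = Nat.card G * ((U ⊓ V).index * Nat.card (U ⊓ V : Subgroup G)) := by
        rw [Subgroup.index_mul_card]
    _ = Nat.card G * (U ⊓ V).index * Nat.card (U ⊓ V : Subgroup G) := by ring

lemma mul_eq_univ_of_card [Finite G] {U V : Subgroup G}
    (h : Nat.card ((U : Set G) * (V : Set G)) = Nat.card G) :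
    (U : Set G) * (V : Set G) = Set.univ := by
  apply Set.eq_of_subset_of_ncard_le (Set.subset_univ _)
  rw [Set.ncard_univ, ← Nat.card_coe_set_eq, h]

lemma L1 [Finite G] {U V : Subgroup G} {a b : G}
    (hcop : Nat.Coprime U.index V.index)
    (hd : Disjoint (a • (U : Set G)) (b • (V : Set G))) : False := by
  have hdvdU : U.index ∣ (U ⊓ V).index := Subgroup.index_dvd_of_le inf_le_left
  have hdvdV : V.index ∣ (U ⊓ V).index := Subgroup.index_dvd_of_le inf_le_right
  have hdvd : U.index * V.index ∣ (U ⊓ V).index := hcop.mul_dvd_of_dvd_of_dvd hdvdU hdvdV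
  have hle : (U ⊓ V).index ≤ U.index * V.index := by
    have hdag := dagger U V
    have hn : 0 < Nat.card G := Nat.card_pos
    have hmul : Nat.card G * (U ⊓ V).index ≤ Nat.card G * (U.index * V.index) := by
      rw [← hdag]
      exact Nat.mul_le_mul_right _ (prod_card_le U V)
    exact Nat.le_of_mul_le_mul_left hmul hn
  have heq : (U ⊓ V).index = U.index * V.index :=
    le_antisymm hle (Nat.le_of_dvd (Nat.pos_of_ne_zero
      (Subgroup.index_ne_zero_of_finite (H := U ⊓ V))) hdvd)
  have hcard : Nat.card ((U : Set G) * (V : Set G)) = Nat.card G := by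
    have hdag := dagger U V
    rw [heq] at hdag
    have hpos : 0 < U.index * V.index :=
      Nat.pos_of_ne_zero (by
        simp [Nat.mul_eq_zero, Subgroup.index_ne_zero_of_finite])
    exact Nat.eq_of_mul_eq_mul_right hpos (by linarith)
  have huniv := mul_eq_univ_of_card hcard
  apply not_disjoint_iff_mem_mul.mpr _ hd
  rw [huniv]; trivial

lemma dvd_helper {u v D : ℕ} (h : Nat.Coprime u v) (h1 : 2 * u ∣ D) (h2 : 2 * v ∣ D) :
    2 * (u * v) ∣ D := by
  obtain ⟨a, rfl⟩ := h1
  have h3 : v ∣ u * a := by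
    have : 2 * v ∣ 2 * (u * a) := by rwa [← mul_assoc]
    exact (mul_dvd_mul_iff_left (two_ne_zero)).mp this
  obtain ⟨c, rfl⟩ := (Nat.Coprime.dvd_of_dvd_mul_left h.symm h3 : v ∣ a)
  exact ⟨c, by ring⟩

lemma prod_card_lt [Finite G] {U V : Subgroup G} {a b : G}
    (hd : Disjoint (a • (U : Set G)) (b • (V : Set G))) :
    Nat.card ((U : Set G) * (V : Set G)) < Nat.card G := by
  rcases lt_or_eq_of_le (prod_card_le U V) with h | h
  · exact h
  · exfalso
    apply not_disjoint_iff_mem_mul.mpr _ hd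
    rw [mul_eq_univ_of_card h]; trivial

lemma pair_lemma [Finite G] {U V : Subgroup G} {a b : G} {u v : ℕ}
    (hU : U.index = 2 * u) (hV : V.index = 2 * v) (huv : Nat.Coprime u v)
    (hd : Disjoint (a • (U : Set G)) (b • (V : Set G))) :
    (U ⊓ V).index = 2 * (u * v) ∧
      2 * Nat.card ((U : Set G) * (V : Set G)) = Nat.card G := by
  have hUdvd : 2 * u ∣ (U ⊓ V).index := hU ▸ Subgroup.index_dvd_of_le inf_le_left
  have hVdvd : 2 * v ∣ (U ⊓ V).index := hV ▸ Subgroup.index_dvd_of_le inf_le_right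
  obtain ⟨t, ht⟩ := dvd_helper huv hUdvd hVdvd
  have hu0 : 0 < u := by
    rcases Nat.eq_zero_or_pos u with h | h
    · exfalso; exact Subgroup.index_ne_zero_of_finite (H := U) (by rw [hU, h])
    · exact h
  have hv0 : 0 < v := by
    rcases Nat.eq_zero_or_pos v with h | h
    · exfalso; exact Subgroup.index_ne_zero_of_finite (H := V) (by rw [hV, h])
    · exact h
  have hdag := dagger U V
  rw [hU, hV, ht] at hdag
  -- hdag : card * (2u * 2v) = n * (2uv * t)
  have key : 2 * Nat.card ((U : Set G) * (V : Set G)) = Nat.card G * t := by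
    have h2 : (2 * (u * v)) * (2 * Nat.card ((U : Set G) * (V : Set G))) =
        (2 * (u * v)) * (Nat.card G * t) := by
      calc (2 * (u * v)) * (2 * Nat.card ((U : Set G) * (V : Set G)))
          = Nat.card ((U : Set G) * (V : Set G)) * (2 * u * (2 * v)) := by ring
        _ = Nat.card G * (2 * (u * v) * t) := hdag
        _ = (2 * (u * v)) * (Nat.card G * t) := by ring
    exact Nat.eq_of_mul_eq_mul_left (by positivity) h2
  have ht1 : t = 1 := by
    have hlt := prod_card_lt hd
    have h3 : Nat.card G * t < Nat.card G * 2 := by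
      rw [← key]; omega
    have ht2 : t < 2 := Nat.lt_of_mul_lt_mul_left h3
    have ht0 : t ≠ 0 := by
      intro h0
      exact Subgroup.index_ne_zero_of_finite (H := U ⊓ V) (by rw [ht, h0, mul_zero])
    omega
  rw [ht1] at ht key
  rw [mul_one] at ht key
  exact ⟨ht, key⟩

lemma triple [Finite G] {U V W : Subgroup G} {a b c : G} {u v w : ℕ}
    (hU : U.index = 2 * u) (hV : V.index = 2 * v) (hW : W.index = 2 * w)
    (huv : Nat.Coprime u v) (huw : Nat.Coprime u w) (hvw : Nat.Coprime v w)
    (hab : Disjoint (a • (U : Set G)) (b • (V : Set G)))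
    (hac : Disjoint (a • (U : Set G)) (c • (W : Set G)))
    (hbc : Disjoint (b • (V : Set G)) (c • (W : Set G))) :
    (U : Set G) * (V : Set G) = (U : Set G) * (W : Set G) := by
  obtain ⟨hiVW, -⟩ := pair_lemma hV hW hvw hbc
  obtain ⟨-, hUV⟩ := pair_lemma hU hV huv hab
  obtain ⟨-, hUW⟩ := pair_lemma hU hW huw hac
  set X := V ⊓ W with hX
  have hXle : 2 * (u * (v * w)) ∣ (U ⊓ X).index := by
    refine dvd_helper (huv.mul_right huw) ?_ ?_
    · exact hU ▸ Subgroup.index_dvd_of_le inf_le_left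
    · exact hiVW ▸ Subgroup.index_dvd_of_le inf_le_right
  obtain ⟨t, ht⟩ := hXle
  have hu0 : 0 < u := by
    rcases Nat.eq_zero_or_pos u with h | h
    · exfalso; exact Subgroup.index_ne_zero_of_finite (H := U) (by rw [hU, h])
    · exact h
  have hv0 : 0 < v := by
    rcases Nat.eq_zero_or_pos v with h | h
    · exfalso; exact Subgroup.index_ne_zero_of_finite (H := V) (by rw [hV, h])
    · exact h
  have hw0 : 0 < w := by
    rcases Nat.eq_zero_or_pos w with h | h
    · exfalso; exact Subgroup.index_ne_zero_of_finite (H := W) (by rw [hW, h])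
    · exact h
  have hdag := dagger U X
  rw [hU, hiVW, ht] at hdag
  -- hdag : card(U*X) * (2u * (2vw)) = n * (2uvw * t)
  have key : 2 * Nat.card ((U : Set G) * (X : Set G)) = Nat.card G * t := by
    have h2 : (2 * (u * (v * w))) * (2 * Nat.card ((U : Set G) * (X : Set G))) =
        (2 * (u * (v * w))) * (Nat.card G * t) := by
      calc (2 * (u * (v * w))) * (2 * Nat.card ((U : Set G) * (X : Set G)))
          = Nat.card ((U : Set G) * (X : Set G)) * (2 * u * (2 * (v * w))) := by ring
        _ = Nat.card G * (2 * (u * (v * w)) * t) := hdag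
        _ = (2 * (u * (v * w))) * (Nat.card G * t) := by ring
    exact Nat.eq_of_mul_eq_mul_left (by positivity) h2
  have hsubV : (U : Set G) * (X : Set G) ⊆ (U : Set G) * (V : Set G) := by
    apply Set.mul_subset_mul_left
    exact fun x hx => (Subgroup.mem_inf.mp hx).1
  have hsubW : (U : Set G) * (X : Set G) ⊆ (U : Set G) * (W : Set G) := by
    apply Set.mul_subset_mul_left
    exact fun x hx => (Subgroup.mem_inf.mp hx).2
  have hle : Nat.card ((U : Set G) * (X : Set G)) ≤ Nat.card ((U : Set G) * (V : Set G)) := by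
    rw [Nat.card_coe_set_eq, Nat.card_coe_set_eq]
    exact Set.ncard_le_ncard hsubV (Set.toFinite _)
  have ht1 : t = 1 := by
    have h3 : Nat.card G * t ≤ Nat.card G * 1 := by
      rw [← key, mul_one, ← hUV]; omega
    have ht2 : t ≤ 1 := Nat.le_of_mul_le_mul_left h3 Nat.card_pos
    have ht0 : t ≠ 0 := by
      intro h0
      exact Subgroup.index_ne_zero_of_finite (H := U ⊓ X) (by rw [ht, h0, mul_zero])
    omega
  rw [ht1, mul_one] at key
  -- now card (U*X) = card(U*V) = card(U*W), with inclusions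
  have hcV : Nat.card ((U : Set G) * (X : Set G)) = Nat.card ((U : Set G) * (V : Set G)) := by
    omega
  have hcW : Nat.card ((U : Set G) * (X : Set G)) = Nat.card ((U : Set G) * (W : Set G)) := by
    omega
  have heqV : (U : Set G) * (X : Set G) = (U : Set G) * (V : Set G) := by
    apply Set.eq_of_subset_of_ncard_le hsubV
    rw [← Nat.card_coe_set_eq, ← Nat.card_coe_set_eq, hcV]
  have heqW : (U : Set G) * (X : Set G) = (U : Set G) * (W : Set G) := by
    apply Set.eq_of_subset_of_ncard_le hsubW
    rw [← Nat.card_coe_set_eq, ← Nat.card_coe_set_eq, hcW]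
  rw [← heqV, heqW]

lemma three_le_card {α : Type*} [Finite α] {a b c : α}
    (hab : a ≠ b) (hac : a ≠ c) (hbc : b ≠ c) : 3 ≤ Nat.card α := by
  classical
  have := Fintype.ofFinite α
  rw [Nat.card_eq_fintype_card]
  have h : ({a, b, c} : Finset α).card = 3 := by
    rw [Finset.card_insert_of_notMem (by simp [hab, hac]),
      Finset.card_insert_of_notMem (by simp [hbc]), Finset.card_singleton]
  rw [← h]
  exact Finset.card_le_univ _

lemma four_le_card {α : Type*} [Finite α] {a b c d : α}
    (hab : a ≠ b) (hac : a ≠ c) (had : a ≠ d) (hbc : b ≠ c) (hbd : b ≠ d)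
    (hcd : c ≠ d) : 4 ≤ Nat.card α := by
  classical
  have := Fintype.ofFinite α
  rw [Nat.card_eq_fintype_card]
  have h : ({a, b, c, d} : Finset α).card = 4 := by
    rw [Finset.card_insert_of_notMem (by simp [hab, hac, had]),
      Finset.card_insert_of_notMem (by simp [hbc, hbd]),
      Finset.card_insert_of_notMem (by simp [hcd]), Finset.card_singleton]
  rw [← h]
  exact Finset.card_le_univ _

lemma pigeonhole_two {α : Type*} [Finite α] (h2 : Nat.card α = 2) {a b c : α}
    (hac : a ≠ c) (hbc : b ≠ c) : a = b := by
  by_contra hab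
  have := three_le_card hab hac hbc
  omega

lemma mem_of_index_two [Finite G] {P : Subgroup G} (h : P.index = 2) {c x y : G}
    (hx : c⁻¹ * x ∉ P) (hy : c⁻¹ * y ∉ P) : x⁻¹ * y ∈ P := by
  have hcard : Nat.card (G ⧸ P) = 2 := by rw [← Subgroup.index_eq_card, h]
  have hxq : (x : G ⧸ P) ≠ (c : G ⧸ P) := by
    intro hq
    exact hx (QuotientGroup.eq.mp hq.symm)
  have hyq : (y : G ⧸ P) ≠ (c : G ⧸ P) := by
    intro hq
    exact hy (QuotientGroup.eq.mp hq.symm)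
  exact QuotientGroup.eq.mp (pigeonhole_two hcard hxq hyq)

lemma coe_mul_self {K : Type*} [Group K] (H : Subgroup K) :
    (H : Set K) * (H : Set K) = (H : Set K) := by
  ext x
  constructor
  · rintro ⟨a, ha, b, hb, rfl⟩
    exact mul_mem ha hb
  · intro hx
    exact ⟨x, hx, 1, one_mem _, mul_one x⟩

lemma claimS {K : Type*} [Group K] [Finite K] (W₃ W₄ W₅ : Subgroup K)
    (d₃ d₄ d₅ : K) (u v w : ℕ)
    (h₃ : W₃.index = 2 * u) (h₄ : W₄.index = 2 * v) (h₅ : W₅.index = 2 * w)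
    (huv : Nat.Coprime u v) (huw : Nat.Coprime u w) (hvw : Nat.Coprime v w)
    (D34 : Disjoint (d₃ • (W₃ : Set K)) (d₄ • (W₄ : Set K)))
    (D35 : Disjoint (d₃ • (W₃ : Set K)) (d₅ • (W₅ : Set K)))
    (D45 : Disjoint (d₄ • (W₄ : Set K)) (d₅ • (W₅ : Set K))) : False := by
  have t₁ : (W₃ : Set K) * (W₄ : Set K) = (W₃ : Set K) * (W₅ : Set K) :=
    triple h₃ h₄ h₅ huv huw hvw D34 D35 D45
  have t₂ : (W₄ : Set K) * (W₃ : Set K) = (W₄ : Set K) * (W₅ : Set K) :=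
    triple h₄ h₃ h₅ huv.symm hvw huw D34.symm D45 D35
  have t₃ : (W₅ : Set K) * (W₃ : Set K) = (W₅ : Set K) * (W₄ : Set K) :=
    triple h₅ h₃ h₄ huw.symm hvw.symm huv D35.symm D45.symm D34
  set A : Set K := (W₃ : Set K) * (W₄ : Set K) with hAdef
  have hAinv' : A⁻¹ = (W₄ : Set K) * (W₃ : Set K) := by
    rw [hAdef, mul_inv_rev, inv_coe_set, inv_coe_set]
  have hB : A⁻¹ = (W₄ : Set K) * (W₅ : Set K) := hAinv'.trans t₂
  have hA2 : A = (W₅ : Set K) * (W₄ : Set K) := by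
    calc A = (A⁻¹)⁻¹ := (inv_inv A).symm
      _ = ((W₄ : Set K) * (W₅ : Set K))⁻¹ := by rw [hB]
      _ = (W₅ : Set K) * (W₄ : Set K) := by rw [mul_inv_rev, inv_coe_set, inv_coe_set]
  have hA3 : A = (W₅ : Set K) * (W₃ : Set K) := hA2.trans t₃.symm
  have hAself : A⁻¹ = A := by
    calc A⁻¹ = ((W₅ : Set K) * (W₃ : Set K))⁻¹ := by rw [← hA3]
      _ = (W₃ : Set K) * (W₅ : Set K) := by rw [mul_inv_rev, inv_coe_set, inv_coe_set]
      _ = A := t₁.symm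
  have hA45 : A = (W₄ : Set K) * (W₅ : Set K) := by rw [← hAself]; exact hB
  have hA35 : A = (W₃ : Set K) * (W₅ : Set K) := t₁
  have hA43 : A = (W₄ : Set K) * (W₃ : Set K) := by rw [← hAself]; exact hAinv'
  have hAA : A * A = A := by
    calc A * A = ((W₃ : Set K) * ((W₄ : Set K) * (W₃ : Set K))) * (W₄ : Set K) := by
          rw [hAdef]; rw [← mul_assoc, mul_assoc (W₃ : Set K) (W₄ : Set K) (W₃ : Set K)]
      _ = ((W₃ : Set K) * ((W₃ : Set K) * (W₄ : Set K))) * (W₄ : Set K) := by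
          rw [← hA43, ← hAdef]
      _ = ((W₃ : Set K) * (W₃ : Set K)) * ((W₄ : Set K) * (W₄ : Set K)) := by
          rw [← mul_assoc, mul_assoc]
      _ = A := by rw [coe_mul_self, coe_mul_self, hAdef]
  have honeA : (1 : K) ∈ A := by
    rw [hAdef]; exact ⟨1, one_mem _, 1, one_mem _, mul_one 1⟩
  let T : Subgroup K :=
    { carrier := A
      mul_mem' := fun {p q} hp hq => by
        have h := Set.mul_mem_mul hp hq
        rwa [hAA] at h
      one_mem' := honeA
      inv_mem' := fun {p} hp => by
        have h : p⁻¹ ∈ A⁻¹ := Set.inv_mem_inv.mpr hp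
        rwa [hAself] at h }
  have hmemT : ∀ x : K, x ∈ T ↔ x ∈ A := fun x => Iff.rfl
  have hnA : Nonempty ↥A := ⟨⟨1, honeA⟩⟩
  have hTcard : Nat.card T = Nat.card ↥A := rfl
  have hn : 2 * Nat.card ↥A = Nat.card K := by
    have := (pair_lemma h₃ h₄ huv D34).2
    rw [← hAdef] at this
    exact this
  have hT2 : T.index = 2 := by
    have h1 : T.index * Nat.card T = Nat.card K := Subgroup.index_mul_card T
    rw [hTcard] at h1
    have hpos : 0 < Nat.card ↥A := Nat.card_pos
    have : T.index * Nat.card ↥A = 2 * Nat.card ↥A := by rw [h1, ← hn]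
    exact Nat.eq_of_mul_eq_mul_right hpos this
  by_cases h34m : d₃⁻¹ * d₄ ∈ A
  · exact not_disjoint_iff_mem_mul.mpr h34m D34
  · by_cases h35m : d₃⁻¹ * d₅ ∈ A
    · refine not_disjoint_iff_mem_mul.mpr ?_ D35
      rw [← hA35]; exact h35m
    · have h45m : d₄⁻¹ * d₅ ∈ T :=
        mem_of_index_two hT2 (c := d₃) (fun h => h34m ((hmemT _).mp h))
          (fun h => h35m ((hmemT _).mp h))
      refine not_disjoint_iff_mem_mul.mpr ?_ D45
      rw [← hA45]; exact (hmemT _).mp h45m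

lemma normalCore_index_dvd_six [Finite G] {U : Subgroup G} (hU : U.index = 3) :
    U.normalCore.index ∣ 6 := by
  classical
  rw [Subgroup.normalCore_eq_ker, Subgroup.index_ker]
  have h1 : Nat.card (MulAction.toPermHom G (G ⧸ U)).range ∣
      Nat.card (Equiv.Perm (G ⧸ U)) := Subgroup.card_subgroup_dvd_card _
  have h2 : Nat.card (G ⧸ U) = 3 := by rw [← Subgroup.index_eq_card, hU]
  have := Fintype.ofFinite (G ⧸ U)
  rw [Nat.card_eq_fintype_card] at h2
  have h3 : Nat.card (Equiv.Perm (G ⧸ U)) = 6 := by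
    rw [Nat.card_eq_fintype_card, Fintype.card_perm, h2]
    decide
  rwa [h3] at h1

lemma master (K : Subgroup G) [K.Normal] (W : Subgroup G) :
    Nat.card (W.map (QuotientGroup.mk' K)) * W.index = W.relIndex K * K.index := by
  have h1 : (W ⊓ K).relIndex W * W.index = (W ⊓ K).index :=
    Subgroup.relIndex_mul_index inf_le_left
  have h2 : (W ⊓ K).relIndex K * K.index = (W ⊓ K).index :=
    Subgroup.relIndex_mul_index inf_le_right
  have h3 : (W ⊓ K).relIndex W = K.relIndex W := by
    rw [inf_comm, Subgroup.inf_relIndex_right]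
  have h4 : (W ⊓ K).relIndex K = W.relIndex K := Subgroup.inf_relIndex_right W K
  have h5 : K.relIndex W = Nat.card (W.map (QuotientGroup.mk' K)) := by
    conv_lhs => rw [← QuotientGroup.ker_mk' K]
    rw [Subgroup.relIndex_ker]
  rw [← h5, ← h4, h2, ← h1, h3]

lemma mem_coset_iff_q {K U : Subgroup G} [K.Normal] (hle : K ≤ U) {g x : G} :
    x ∈ g • (U : Set G) ↔
      (QuotientGroup.mk' K x) ∈ (QuotientGroup.mk' K g) •
        ((U.map (QuotientGroup.mk' K)) : Set (G ⧸ K)) := by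
  constructor
  · rintro ⟨y, hy, rfl⟩
    refine ⟨QuotientGroup.mk' K y, ⟨y, hy, rfl⟩, ?_⟩
    show (QuotientGroup.mk' K g) * (QuotientGroup.mk' K y) = QuotientGroup.mk' K (g * y)
    rw [← map_mul]
  · rintro ⟨p, hp, hpx⟩
    obtain ⟨uu, huu, rfl⟩ := hp
    have heq : (QuotientGroup.mk' K) (g * uu) = QuotientGroup.mk' K x := by
      rw [map_mul]; exact hpx
    have hker : (g * uu)⁻¹ * x ∈ K := by
      have : ((g * uu : G) : G ⧸ K) = (x : G ⧸ K) := heq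
      exact QuotientGroup.eq.mp this
    refine ⟨uu * ((g * uu)⁻¹ * x), U.mul_mem huu (hle hker), ?_⟩
    show g * (uu * ((g * uu)⁻¹ * x)) = x
    group

lemma disjoint_q {K U V : Subgroup G} [K.Normal] (hle : K ≤ U) {g h : G}
    (hd : Disjoint (g • (U : Set G)) (h • (V : Set G))) :
    Disjoint ((QuotientGroup.mk' K g) • ((U.map (QuotientGroup.mk' K)) : Set (G ⧸ K)))
      ((QuotientGroup.mk' K h) • ((V.map (QuotientGroup.mk' K)) : Set (G ⧸ K))) := by
  rw [Set.disjoint_left]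
  rintro q hq1 hq2
  obtain ⟨p, hp, hpq⟩ := hq2
  obtain ⟨vv, hvv, rfl⟩ := hp
  have hx2 : h * vv ∈ h • (V : Set G) := ⟨vv, hvv, rfl⟩
  have hx1 : h * vv ∈ g • (U : Set G) := by
    rw [mem_coset_iff_q hle]
    have hq : QuotientGroup.mk' K (h * vv) = q := by
      rw [map_mul]; exact hpq
    rw [hq]
    exact hq1
  exact Set.disjoint_left.mp hd hx1 hx2

lemma exists_coset_lift {K U : Subgroup G} [K.Normal] {g : G} {q : G ⧸ K}
    (hq : q ∈ (QuotientGroup.mk' K g) • ((U.map (QuotientGroup.mk' K)) : Set (G ⧸ K))) :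
    ∃ x : G, x ∈ g • (U : Set G) ∧ QuotientGroup.mk' K x = q := by
  obtain ⟨p, hp, hpq⟩ := hq
  obtain ⟨u, hu, rfl⟩ := hp
  refine ⟨g * u, ⟨u, hu, rfl⟩, ?_⟩
  rw [map_mul]
  exact hpq

lemma fiber_disjoint {K Ui Uj : Subgroup G} {gi gj xi xj b : G}
    (hxi : xi ∈ gi • (Ui : Set G)) (hxj : xj ∈ gj • (Uj : Set G))
    (hd : Disjoint (gi • (Ui : Set G)) (gj • (Uj : Set G)))
    (hbi : b⁻¹ * xi ∈ K) (hbj : b⁻¹ * xj ∈ K) :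
    Disjoint ((⟨b⁻¹ * xi, hbi⟩ : K) • ((Ui.subgroupOf K : Subgroup K) : Set K))
      ((⟨b⁻¹ * xj, hbj⟩ : K) • ((Uj.subgroupOf K : Subgroup K) : Set K)) := by
  rw [Set.disjoint_left]
  rintro z hz1 hz2
  obtain ⟨w1, hw1, hzw1⟩ := hz1
  obtain ⟨w2, hw2, hzw2⟩ := hz2
  have e1 : (b : G) * (z : G) = xi * ((w1 : K) : G) := by
    rw [← hzw1]
    show (b : G) * (((⟨b⁻¹ * xi, hbi⟩ : K) * w1 : K) : G) = xi * ((w1 : K) : G)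
    push_cast
    group
  have e2 : (b : G) * (z : G) = xj * ((w2 : K) : G) := by
    rw [← hzw2]
    show (b : G) * (((⟨b⁻¹ * xj, hbj⟩ : K) * w2 : K) : G) = xj * ((w2 : K) : G)
    push_cast
    group
  have hm1 : xi * ((w1 : K) : G) ∈ gi • (Ui : Set G) := by
    obtain ⟨y, hy, rfl⟩ := hxi
    refine ⟨y * ((w1 : K) : G), Ui.mul_mem hy (Subgroup.mem_subgroupOf.mp hw1), ?_⟩
    show gi * (y * ((w1 : K) : G)) = (gi * y) * ((w1 : K) : G)
    group
  have hm2 : xj * ((w2 : K) : G) ∈ gj • (Uj : Set G) := by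
    obtain ⟨y, hy, rfl⟩ := hxj
    refine ⟨y * ((w2 : K) : G), Uj.mul_mem hy (Subgroup.mem_subgroupOf.mp hw2), ?_⟩
    show gj * (y * ((w2 : K) : G)) = (gj * y) * ((w2 : K) : G)
    group
  rw [← e2] at hm2
  rw [← e1] at hm1
  exact Set.disjoint_left.mp hd hm1 hm2

lemma ncard_coset {Q : Type*} [Group Q] (g : Q) (P : Subgroup Q) :
    (g • (P : Set Q)).ncard = Nat.card P := by
  rw [Set.ncard_smul_set, ← Nat.card_coe_set_eq]
  rfl

lemma subgroup_card_two {Q : Type*} [Group Q] {P : Subgroup Q}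
    (h : Nat.card P = 2) : ∃ p : Q, p ∈ P ∧ p ≠ 1 ∧ orderOf p = 2 := by
  classical
  have hfin : Finite P := Nat.finite_of_card_ne_zero (by omega)
  have hne : P ≠ ⊥ := by
    intro hbot
    rw [hbot] at h
    simp at h
  obtain ⟨p, hp, hp1⟩ : ∃ p : Q, p ∈ P ∧ p ≠ 1 := by
    by_contra hc
    push_neg at hc
    exact hne (by
      ext z
      simp only [Subgroup.mem_bot]
      exact ⟨fun hz => by by_contra h1; exact h1 (hc z hz), fun hz => hz ▸ P.one_mem⟩)
  refine ⟨p, hp, hp1, ?_⟩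
  have hdvd : orderOf p ∣ 2 := h ▸ Subgroup.orderOf_dvd_natCard P hp
  rcases (Nat.dvd_prime Nat.prime_two).mp hdvd with h1 | h2
  · exact absurd (orderOf_eq_one_iff.mp h1) hp1
  · exact h2

lemma bash_core (Aa Ab Ac Ba Bb Bc Ea Eb Ec Pa Pb Pc : Prop)
    (memc : Ac ∨ Bc)
    (shab : (Aa ∧ Ab) ∨ (Ba ∧ Bb) → Ea ∧ Eb)
    (shac : (Aa ∧ Ac) ∨ (Ba ∧ Bc) → Ea ∧ Ec)
    (shbc : (Ab ∧ Ac) ∨ (Bb ∧ Bc) → Eb ∧ Ec)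
    (hma : (Aa ∧ Ba) ∨ (Ea → Pa)) (hmb : (Ab ∧ Bb) ∨ (Eb → Pb))
    (hmc : (Ac ∧ Bc) ∨ (Ec → Pc))
    (noab : ¬(Pa ∧ Pb)) (noac : ¬(Pa ∧ Pc)) (nobc : ¬(Pb ∧ Pc))
    (hBa : Ba) (hAb : Ab) (hnAa : ¬Aa) (hnBb : ¬Bb) : False := by
  have hEPa : Ea → Pa := hma.resolve_left (fun h => hnAa h.1)
  have hEPb : Eb → Pb := hmb.resolve_left (fun h => hnBb h.2)
  rcases memc with hAc | hBc
  · have hEbc := shbc (Or.inl ⟨hAb, hAc⟩)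
    have hPb : Pb := hEPb hEbc.1
    by_cases hBc : Bc
    · have hEac := shac (Or.inr ⟨hBa, hBc⟩)
      exact noab ⟨hEPa hEac.1, hPb⟩
    · have hEPc : Ec → Pc := hmc.resolve_left (fun h => hBc h.2)
      exact nobc ⟨hPb, hEPc hEbc.2⟩
  · have hEac := shac (Or.inr ⟨hBa, hBc⟩)
    have hPa : Pa := hEPa hEac.1
    by_cases hAc : Ac
    · have hEbc := shbc (Or.inl ⟨hAb, hAc⟩)
      exact noab ⟨hPa, hEPb hEbc.1⟩
    · have hEPc : Ec → Pc := hmc.resolve_left (fun h => hAc h.1)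
      exact noac ⟨hPa, hEPc hEac.2⟩

lemma bash_prop (A3 A4 A5 B3 B4 B5 E3 E4 E5 P3 P4 P5 : Prop)
    (mem3 : A3 ∨ B3) (mem4 : A4 ∨ B4) (mem5 : A5 ∨ B5)
    (sh34 : (A3 ∧ A4) ∨ (B3 ∧ B4) → E3 ∧ E4)
    (sh35 : (A3 ∧ A5) ∨ (B3 ∧ B5) → E3 ∧ E5)
    (sh45 : (A4 ∧ A5) ∨ (B4 ∧ B5) → E4 ∧ E5)
    (hm3 : (A3 ∧ B3) ∨ (E3 → P3)) (hm4 : (A4 ∧ B4) ∨ (E4 → P4))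
    (hm5 : (A5 ∧ B5) ∨ (E5 → P5))
    (no34 : ¬(P3 ∧ P4)) (no35 : ¬(P3 ∧ P5)) (no45 : ¬(P4 ∧ P5)) :
    (A3 ∧ A4 ∧ A5) ∨ (B3 ∧ B4 ∧ B5) := by
  by_contra hcon
  have hA : ¬(A3 ∧ A4 ∧ A5) := fun h => hcon (Or.inl h)
  have hB : ¬(B3 ∧ B4 ∧ B5) := fun h => hcon (Or.inr h)
  clear hcon
  by_cases hA3 : A3 <;> by_cases hA4 : A4 <;> by_cases hA5 : A5
  · exact hA ⟨hA3, hA4, hA5⟩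
  all_goals (
    first
    | (by_cases hB3 : B3 <;> by_cases hB4 : B4 <;> by_cases hB5 : B5 <;>
       first
       | exact hB ⟨hB3, hB4, hB5⟩
       | exact mem3.elim (fun h => ‹¬A3› h) (fun h => ‹¬B3› h)
       | exact mem4.elim (fun h => ‹¬A4› h) (fun h => ‹¬B4› h)
       | exact mem5.elim (fun h => ‹¬A5› h) (fun h => ‹¬B5› h)
       | exact bash_core A3 A4 A5 B3 B4 B5 E3 E4 E5 P3 P4 P5 mem5 sh34 sh35 sh45 hm3 hm4 hm5 no34 no35 no45 ‹B3› ‹A4› ‹¬A3› ‹¬B4›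
       | exact bash_core A4 A3 A5 B4 B3 B5 E4 E3 E5 P4 P3 P5 mem5 (fun h => (sh34 (h.imp And.symm And.symm)).symm) sh45 sh35 hm4 hm3 hm5 (fun h => no34 h.symm) no45 no35 ‹B4› ‹A3› ‹¬A4› ‹¬B3›
       | exact bash_core A3 A5 A4 B3 B5 B4 E3 E5 E4 P3 P5 P4 mem4 sh35 sh34 (fun h => (sh45 (h.imp And.symm And.symm)).symm) hm3 hm5 hm4 no35 no34 (fun h => no45 h.symm) ‹B3› ‹A5› ‹¬A3› ‹¬B5›
       | exact bash_core A5 A3 A4 B5 B3 B4 E5 E3 E4 P5 P3 P4 mem4 (fun h => (sh35 (h.imp And.symm And.symm)).symm) (fun h => (sh45 (h.imp And.symm And.symm)).symm) sh34 hm5 hm3 hm4 (fun h => no35 h.symm) (fun h => no45 h.symm) no34 ‹B5› ‹A3› ‹¬A5› ‹¬B3›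
       | exact bash_core A4 A5 A3 B4 B5 B3 E4 E5 E3 P4 P5 P3 mem3 sh45 (fun h => (sh34 (h.imp And.symm And.symm)).symm) (fun h => (sh35 (h.imp And.symm And.symm)).symm) hm4 hm5 hm3 no45 (fun h => no34 h.symm) (fun h => no35 h.symm) ‹B4› ‹A5› ‹¬A4› ‹¬B5›
       | exact bash_core A5 A4 A3 B5 B4 B3 E5 E4 E3 P5 P4 P3 mem3 (fun h => (sh45 (h.imp And.symm And.symm)).symm) (fun h => (sh35 (h.imp And.symm And.symm)).symm) (fun h => (sh34 (h.imp And.symm And.symm)).symm) hm5 hm4 hm3 (fun h => no45 h.symm) (fun h => no35 h.symm) (fun h => no34 h.symm) ‹B5› ‹A4› ‹¬A5› ‹¬B4›))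

lemma mem_coset_smul {Q : Type*} [Group Q] {P : Subgroup Q} {g q : Q} :
    q ∈ g • (P : Set Q) ↔ g⁻¹ * q ∈ P := by
  rw [Set.mem_smul_set_iff_inv_smul_mem]
  rfl

lemma self_mem_coset {Q : Type*} [Group Q] {P : Subgroup Q} (g : Q) :
    g ∈ g • (P : Set Q) :=
  mem_coset_smul.mpr (by simp [Subgroup.one_mem])

lemma evens_of_not_coprime {e3 e4 r3 r4 m3 m4 : ℕ} (he3 : e3 = m3 * r3)
    (he4 : e4 = m4 * r4) (hm3 : m3 = 1 ∨ m3 = 2) (hm4 : m4 = 1 ∨ m4 = 2)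
    (hcop : Nat.Coprime r3 r4) (h : ¬ Nat.Coprime e3 e4) : Even e3 ∧ Even e4 := by
  set g := Nat.gcd e3 e4 with hg
  have hg1 : g ≠ 1 := h
  set p := g.minFac with hp
  have hgpos : g ≠ 0 ∨ True := Or.inr trivial
  have hpp : p.Prime := Nat.minFac_prime hg1
  have hpe3 : p ∣ e3 := (Nat.minFac_dvd g).trans (Nat.gcd_dvd_left _ _)
  have hpe4 : p ∣ e4 := (Nat.minFac_dvd g).trans (Nat.gcd_dvd_right _ _)
  have hp2 : p = 2 := by
    by_contra hp2
    have hpodd : 3 ≤ p := by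
      have := hpp.two_le
      omega
    have hpr3 : p ∣ r3 := by
      rcases (Nat.Prime.dvd_mul hpp).mp (he3 ▸ hpe3) with h' | h'
      · exfalso; have := Nat.le_of_dvd (by omega) h'; omega
      · exact h'
    have hpr4 : p ∣ r4 := by
      rcases (Nat.Prime.dvd_mul hpp).mp (he4 ▸ hpe4) with h' | h'
      · exfalso; have := Nat.le_of_dvd (by omega) h'; omega
      · exact h'
    have : p ∣ 1 := hcop ▸ Nat.dvd_gcd hpr3 hpr4
    have := Nat.le_of_dvd one_pos this
    omega
  rw [hp2] at hpe3 hpe4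
  exact ⟨even_iff_two_dvd.mpr hpe3, even_iff_two_dvd.mpr hpe4⟩

lemma not_both_even {r3 r4 : ℕ} (hcop : Nat.Coprime r3 r4) :
    ¬ (Even r3 ∧ Even r4) := by
  rintro ⟨h3, h4⟩
  have : (2 : ℕ) ∣ 1 := hcop ▸ Nat.dvd_gcd (even_iff_two_dvd.mp h3) (even_iff_two_dvd.mp h4)
  omega

lemma half_dvd {m r u : ℕ} (hm : m = 1 ∨ m = 2) (he : m * r = 2 * u) : u ∣ r := by
  rcases hm with h | h
  · subst h; exact ⟨2, by omega⟩
  · subst h; exact ⟨1, by omega⟩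

lemma odd_coprime_two {r : ℕ} (h : Odd r) : Nat.Coprime r 2 := by
  rw [Nat.coprime_comm, Nat.Prime.coprime_iff_not_dvd Nat.prime_two, ← even_iff_two_dvd]
  exact (Nat.not_even_iff_odd.mpr h)


lemma dvd6_cases {m : ℕ} (h : m ∣ 6) (h0 : m ≠ 0) : m = 1 ∨ m = 2 ∨ m = 3 ∨ m = 6 := by
  have hle := Nat.le_of_dvd (by norm_num) h
  interval_cases m <;> revert h <;> decide


end HSAux

theorem not_G_harmonic_3_3r2_6r3_6r4_6r5
    (r₂ r₃ r₄ r₅ : ℕ) (hr₂ : 0 < r₂) (hr₃ : 0 < r₃) (hr₄ : 0 < r₄) (hr₅ : 0 < r₅)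
    (h23 : Nat.Coprime r₂ r₃) (h24 : Nat.Coprime r₂ r₄) (h25 : Nat.Coprime r₂ r₅)
    (h34 : Nat.Coprime r₃ r₄) (h35 : Nat.Coprime r₃ r₅) (h45 : Nat.Coprime r₄ r₅)
    (hodd : Odd r₂)
    (G : Type*) [Group G] [Fintype G] :
    ¬ ∃ (U₁ U₂ U₃ U₄ U₅ : Subgroup G) (g₁ g₂ g₃ g₄ g₅ : G),
      U₁.index = 3 ∧ U₂.index = 3 * r₂ ∧ U₃.index = 6 * r₃ ∧
      U₄.index = 6 * r₄ ∧ U₅.index = 6 * r₅ ∧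
      Disjoint (g₁ • (U₁ : Set G)) (g₂ • (U₂ : Set G)) ∧
      Disjoint (g₁ • (U₁ : Set G)) (g₃ • (U₃ : Set G)) ∧
      Disjoint (g₁ • (U₁ : Set G)) (g₄ • (U₄ : Set G)) ∧
      Disjoint (g₁ • (U₁ : Set G)) (g₅ • (U₅ : Set G)) ∧
      Disjoint (g₂ • (U₂ : Set G)) (g₃ • (U₃ : Set G)) ∧
      Disjoint (g₂ • (U₂ : Set G)) (g₄ • (U₄ : Set G)) ∧
      Disjoint (g₂ • (U₂ : Set G)) (g₅ • (U₅ : Set G)) ∧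
      Disjoint (g₃ • (U₃ : Set G)) (g₄ • (U₄ : Set G)) ∧
      Disjoint (g₃ • (U₃ : Set G)) (g₅ • (U₅ : Set G)) ∧
      Disjoint (g₄ • (U₄ : Set G)) (g₅ • (U₅ : Set G)) := by
  rintro ⟨U₁, U₂, U₃, U₄, U₅, g₁, g₂, g₃, g₄, g₅,
    hi₁, hi₂, hi₃, hi₄, hi₅, D12, D13, D14, D15, D23, D24, D25, D34, D35, D45⟩
  classical
  set K : Subgroup G := U₁.normalCore with hKdef
  haveI hKn : K.Normal := Subgroup.normalCore_normal U₁
  have hKle : K ≤ U₁ := Subgroup.normalCore_le U₁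
  set π : G →* G ⧸ K := QuotientGroup.mk' K with hπdef
  have hKdvd6 : K.index ∣ 6 := HSAux.normalCore_index_dvd_six hi₁
  have hK3dvd : 3 ∣ K.index := hi₁ ▸ Subgroup.index_dvd_of_le hKle
  have hKne : K.index ≠ 0 := Subgroup.index_ne_zero_of_finite
  have hK36 : K.index = 3 ∨ K.index = 6 := by
    obtain ⟨c, hc⟩ := hK3dvd
    have hc2 : c ∣ 2 := by
      have h6 : 3 * c ∣ 3 * 2 := by rw [← hc]; exact hKdvd6
      exact (mul_dvd_mul_iff_left (by norm_num : (3 : ℕ) ≠ 0)).mp h6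
    have hcle := Nat.le_of_dvd (by norm_num) hc2
    have hc0 : c ≠ 0 := by rintro rfl; simp at hc; exact hKne hc
    interval_cases c <;> omega
  have hmaster : ∀ W : Subgroup G,
      Nat.card (W.map π) * W.index = W.relIndex K * K.index := fun W => HSAux.master K W
  have hrel1 : U₁.relIndex K = 1 := by
    show (U₁.subgroupOf K).index = 1
    rw [Subgroup.subgroupOf_eq_top.mpr hKle, Subgroup.index_top]
  have hm1eq : Nat.card (U₁.map π) * 3 = K.index := by
    have h := hmaster U₁
    rwa [hi₁, hrel1, one_mul] at h
  have hcardQ : Nat.card (G ⧸ K) = K.index := (Subgroup.index_eq_card K).symm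
  have hmdvd : ∀ W : Subgroup G, Nat.card (W.map π) ∣ K.index := fun W => by
    rw [← hcardQ]; exact Subgroup.card_subgroup_dvd_card (W.map π)
  have hF_self : π g₁ ∈ (π g₁) • ((U₁.map π : Subgroup (G ⧸ K)) : Set (G ⧸ K)) :=
    HSAux.self_mem_coset _
  -- shared-fiber + coprime relIndex is impossible
  have hfiber_L1 : ∀ (Ui Uj : Subgroup G) (gi gj : G),
      Disjoint (gi • (Ui : Set G)) (gj • (Uj : Set G)) →
      Nat.Coprime (Ui.relIndex K) (Uj.relIndex K) →
      ∀ q : G ⧸ K, q ∈ (π gi) • ((Ui.map π : Subgroup (G ⧸ K)) : Set (G ⧸ K)) →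
        q ∈ (π gj) • ((Uj.map π : Subgroup (G ⧸ K)) : Set (G ⧸ K)) → False := by
    intro Ui Uj gi gj hd hcop q hq1 hq2
    obtain ⟨xi, hxi, hxiq⟩ := HSAux.exists_coset_lift hq1
    obtain ⟨xj, hxj, hxjq⟩ := HSAux.exists_coset_lift hq2
    have hbi : xi⁻¹ * xi ∈ K := by simp [K.one_mem]
    have hbj : xi⁻¹ * xj ∈ K := by
      have heq : (xi : G ⧸ K) = (xj : G ⧸ K) := by
        have h1 : (xi : G ⧸ K) = q := hxiq
        have h2 : (xj : G ⧸ K) = q := hxjq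
        rw [h1, h2]
      exact QuotientGroup.eq.mp heq
    have hdisj := HSAux.fiber_disjoint hxi hxj hd hbi hbj
    exact HSAux.L1 (U := Ui.subgroupOf K) (V := Uj.subgroupOf K) hcop hdisj
  -- common fiber for 3,4,5 is impossible
  have hfinal : ∀ q : G ⧸ K,
      q ∈ (π g₃) • ((U₃.map π : Subgroup (G ⧸ K)) : Set (G ⧸ K)) →
      q ∈ (π g₄) • ((U₄.map π : Subgroup (G ⧸ K)) : Set (G ⧸ K)) →
      q ∈ (π g₅) • ((U₅.map π : Subgroup (G ⧸ K)) : Set (G ⧸ K)) →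
      ∀ u v w : ℕ, U₃.relIndex K = 2 * u → U₄.relIndex K = 2 * v →
        U₅.relIndex K = 2 * w →
      Nat.Coprime u v → Nat.Coprime u w → Nat.Coprime v w → False := by
    intro q hq3 hq4 hq5 u v w hh3 hh4 hh5 cuv cuw cvw
    obtain ⟨x₃, hx₃, hx₃q⟩ := HSAux.exists_coset_lift hq3
    obtain ⟨x₄, hx₄, hx₄q⟩ := HSAux.exists_coset_lift hq4
    obtain ⟨x₅, hx₅, hx₅q⟩ := HSAux.exists_coset_lift hq5
    have hb5 : x₅⁻¹ * x₅ ∈ K := by simp [K.one_mem]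
    have hb3 : x₅⁻¹ * x₃ ∈ K := by
      refine QuotientGroup.eq.mp ?_
      show (x₅ : G ⧸ K) = (x₃ : G ⧸ K)
      have h1 : (x₅ : G ⧸ K) = q := hx₅q
      have h2 : (x₃ : G ⧸ K) = q := hx₃q
      rw [h1, h2]
    have hb4 : x₅⁻¹ * x₄ ∈ K := by
      refine QuotientGroup.eq.mp ?_
      show (x₅ : G ⧸ K) = (x₄ : G ⧸ K)
      have h1 : (x₅ : G ⧸ K) = q := hx₅q
      have h2 : (x₄ : G ⧸ K) = q := hx₄q
      rw [h1, h2]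
    have hd34 := HSAux.fiber_disjoint (b := x₅) hx₃ hx₄ D34 hb3 hb4
    have hd35 := HSAux.fiber_disjoint (b := x₅) hx₃ hx₅ D35 hb3 hb5
    have hd45 := HSAux.fiber_disjoint (b := x₅) hx₄ hx₅ D45 hb4 hb5
    exact HSAux.claimS (U₃.subgroupOf K) (U₄.subgroupOf K) (U₅.subgroupOf K)
      _ _ _ u v w hh3 hh4 hh5 cuv cuw cvw hd34 hd35 hd45
  rcases hK36 with hK3' | hK6'
  · -- CASE A : K.index = 3
    have hm_one : ∀ (W : Subgroup G) (g : G),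
        Disjoint (g₁ • (U₁ : Set G)) (g • (W : Set G)) →
        Nat.card (W.map π) = 1 := by
      intro W g hd
      have hdvd : Nat.card (W.map π) ∣ 3 := hK3' ▸ hmdvd W
      rcases (Nat.dvd_prime Nat.prime_three).mp hdvd with h1 | h3
      · exact h1
      · exfalso
        have huniv : ((W.map π : Subgroup (G ⧸ K)) : Set (G ⧸ K)) = Set.univ := by
          apply Set.eq_of_subset_of_ncard_le (Set.subset_univ _) ?_ (Set.toFinite _)
          rw [Set.ncard_univ, hcardQ, hK3']
          have hc : ((W.map π : Subgroup (G ⧸ K)) : Set (G ⧸ K)).ncard = 3 := by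
            rw [← one_smul (G ⧸ K) ((W.map π : Subgroup (G ⧸ K)) : Set (G ⧸ K)),
              HSAux.ncard_coset, h3]
          rw [hc]
        have hmem : π g₁ ∈ (π g) • ((W.map π : Subgroup (G ⧸ K)) : Set (G ⧸ K)) := by
          rw [huniv, Set.smul_set_univ]
          trivial
        exact Set.disjoint_left.mp (HSAux.disjoint_q hKle hd) hF_self hmem
    have hrel2 : U₂.relIndex K = r₂ := by
      have h := hmaster U₂
      rw [hi₂, hm_one U₂ g₂ D12, one_mul, hK3'] at h
      omega
    have hrel3 : U₃.relIndex K = 2 * r₃ := by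
      have h := hmaster U₃
      rw [hi₃, hm_one U₃ g₃ D13, one_mul, hK3'] at h
      omega
    have hrel4 : U₄.relIndex K = 2 * r₄ := by
      have h := hmaster U₄
      rw [hi₄, hm_one U₄ g₄ D14, one_mul, hK3'] at h
      omega
    have hrel5 : U₅.relIndex K = 2 * r₅ := by
      have h := hmaster U₅
      rw [hi₅, hm_one U₅ g₅ D15, one_mul, hK3'] at h
      omega
    -- distinctness from π g₁
    have hne1 : ∀ (W : Subgroup G) (g : G),
        Disjoint (g₁ • (U₁ : Set G)) (g • (W : Set G)) → π g ≠ π g₁ := by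
      intro W g hd heq
      have hself : π g ∈ (π g) • ((W.map π : Subgroup (G ⧸ K)) : Set (G ⧸ K)) :=
        HSAux.self_mem_coset _
      have hmem : π g ∈ (π g₁) • ((U₁.map π : Subgroup (G ⧸ K)) : Set (G ⧸ K)) := by
        rw [heq]; exact HSAux.self_mem_coset _
      exact Set.disjoint_left.mp (HSAux.disjoint_q hKle hd) hmem hself
    have hne12 : π g₂ ≠ π g₁ := hne1 U₂ g₂ D12
    have hne13 : π g₃ ≠ π g₁ := hne1 U₃ g₃ D13
    have hne14 : π g₄ ≠ π g₁ := hne1 U₄ g₄ D14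
    have hne15 : π g₅ ≠ π g₁ := hne1 U₅ g₅ D15
    -- distinctness from π g₂
    have hcop23 : Nat.Coprime (U₂.relIndex K) (U₃.relIndex K) := by
      rw [hrel2, hrel3]
      exact Nat.Coprime.mul_right (HSAux.odd_coprime_two hodd) h23
    have hcop24 : Nat.Coprime (U₂.relIndex K) (U₄.relIndex K) := by
      rw [hrel2, hrel4]
      exact Nat.Coprime.mul_right (HSAux.odd_coprime_two hodd) h24
    have hcop25 : Nat.Coprime (U₂.relIndex K) (U₅.relIndex K) := by
      rw [hrel2, hrel5]
      exact Nat.Coprime.mul_right (HSAux.odd_coprime_two hodd) h25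
    have hne23 : π g₃ ≠ π g₂ := by
      intro heq
      refine hfiber_L1 U₂ U₃ g₂ g₃ D23 hcop23 (π g₃) ?_ (HSAux.self_mem_coset _)
      rw [heq]; exact HSAux.self_mem_coset _
    have hne24 : π g₄ ≠ π g₂ := by
      intro heq
      refine hfiber_L1 U₂ U₄ g₂ g₄ D24 hcop24 (π g₄) ?_ (HSAux.self_mem_coset _)
      rw [heq]; exact HSAux.self_mem_coset _
    have hne25 : π g₅ ≠ π g₂ := by
      intro heq
      refine hfiber_L1 U₂ U₅ g₂ g₅ D25 hcop25 (π g₅) ?_ (HSAux.self_mem_coset _)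
      rw [heq]; exact HSAux.self_mem_coset _
    have hcard3 : Nat.card (G ⧸ K) = 3 := by rw [hcardQ, hK3']
    have h34q : π g₃ = π g₄ := by
      by_contra hne
      have := HSAux.four_le_card (a := π g₁) (b := π g₂) (c := π g₃) (d := π g₄)
        hne12.symm hne13.symm hne14.symm hne23.symm hne24.symm hne
      omega
    have h35q : π g₃ = π g₅ := by
      by_contra hne
      have := HSAux.four_le_card (a := π g₁) (b := π g₂) (c := π g₃) (d := π g₅)
        hne12.symm hne13.symm hne15.symm hne23.symm hne25.symm hne
      omega
    refine hfinal (π g₃) (HSAux.self_mem_coset _) ?_ ?_ r₃ r₄ r₅ hrel3 hrel4 hrel5 h34 h35 h45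
    · rw [h34q]; exact HSAux.self_mem_coset _
    · rw [h35q]; exact HSAux.self_mem_coset _
  · -- CASE B : K.index = 6
    have hcard6 : Nat.card (G ⧸ K) = 6 := by rw [hcardQ, hK6']
    have hm1 : Nat.card (U₁.map π) = 2 := by
      have h := hm1eq
      omega
    obtain ⟨p, hpP1, hp1, hp2⟩ := HSAux.subgroup_card_two hm1
    have hpF : (π g₁) * p ∈ (π g₁) • ((U₁.map π : Subgroup (G ⧸ K)) : Set (G ⧸ K)) := by
      refine HSAux.mem_coset_smul.mpr ?_
      rw [inv_mul_cancel_left]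
      exact hpP1
    have hm_small : ∀ (W : Subgroup G) (g : G),
        Disjoint (g₁ • (U₁ : Set G)) (g • (W : Set G)) →
        Nat.card (W.map π) = 1 ∨ Nat.card (W.map π) = 2 := by
      intro W g hd
      have hQd := HSAux.disjoint_q hKle hd
      have hdvd : Nat.card (W.map π) ∣ 6 := hK6' ▸ hmdvd W
      have hne0 : Nat.card (W.map π) ≠ 0 := Nat.card_pos.ne'
      have hnot3 : Nat.card (W.map π) ≠ 3 := by
        intro h3
        have hidx : (W.map π).index = 2 := by
          have h := Subgroup.index_mul_card (W.map π)
          rw [h3, hcard6] at h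
          omega
        have hxn : (π g)⁻¹ * (π g₁) ∉ W.map π := by
          intro hmem
          exact Set.disjoint_left.mp hQd hF_self (HSAux.mem_coset_smul.mpr hmem)
        have hyn : (π g)⁻¹ * ((π g₁) * p) ∉ W.map π := by
          intro hmem
          exact Set.disjoint_left.mp hQd hpF (HSAux.mem_coset_smul.mpr hmem)
        have hpW : (π g₁)⁻¹ * ((π g₁) * p) ∈ W.map π :=
          HSAux.mem_of_index_two hidx hxn hyn
        rw [inv_mul_cancel_left] at hpW
        have hdvd3 : orderOf p ∣ 3 := h3 ▸ Subgroup.orderOf_dvd_natCard _ hpW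
        rw [hp2] at hdvd3
        norm_num at hdvd3
      have hnot6 : Nat.card (W.map π) ≠ 6 := by
        intro h6
        have huniv : ((W.map π : Subgroup (G ⧸ K)) : Set (G ⧸ K)) = Set.univ := by
          apply Set.eq_of_subset_of_ncard_le (Set.subset_univ _) ?_ (Set.toFinite _)
          rw [Set.ncard_univ, hcard6]
          have hc : ((W.map π : Subgroup (G ⧸ K)) : Set (G ⧸ K)).ncard = 6 := by
            rw [← one_smul (G ⧸ K) ((W.map π : Subgroup (G ⧸ K)) : Set (G ⧸ K)),
              HSAux.ncard_coset, h6]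
          rw [hc]
        have hmem : π g₁ ∈ (π g) • ((W.map π : Subgroup (G ⧸ K)) : Set (G ⧸ K)) := by
          rw [huniv, Set.smul_set_univ]; trivial
        exact Set.disjoint_left.mp hQd hF_self hmem
      rcases HSAux.dvd6_cases hdvd hne0 with h | h | h | h
      · exact Or.inl h
      · exact Or.inr h
      · exact absurd h hnot3
      · exact absurd h hnot6
    -- m₂ = 2 and relIndex₂ = r₂
    have hmast2 := hmaster U₂
    rw [hi₂, hK6'] at hmast2
    obtain ⟨kk, hkk⟩ := hodd
    have hm2 : Nat.card (U₂.map π) = 2 := by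
      rcases hm_small U₂ g₂ D12 with h1 | h2
      · rw [h1, one_mul] at hmast2; omega
      · exact h2
    have hrel2 : U₂.relIndex K = r₂ := by rw [hm2] at hmast2; omega
    have hm3cases := hm_small U₃ g₃ D13
    have hm4cases := hm_small U₄ g₄ D14
    have hm5cases := hm_small U₅ g₅ D15
    have hrel3 : U₃.relIndex K = Nat.card (U₃.map π) * r₃ := by
      have h := hmaster U₃
      rw [hi₃, hK6'] at h
      have h' : (Nat.card (U₃.map π) * r₃) * 6 = U₃.relIndex K * 6 := by
        calc (Nat.card (U₃.map π) * r₃) * 6 = Nat.card (U₃.map π) * (6 * r₃) := by ring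
          _ = U₃.relIndex K * 6 := h
      exact (Nat.eq_of_mul_eq_mul_right (by norm_num) h').symm
    have hrel4 : U₄.relIndex K = Nat.card (U₄.map π) * r₄ := by
      have h := hmaster U₄
      rw [hi₄, hK6'] at h
      have h' : (Nat.card (U₄.map π) * r₄) * 6 = U₄.relIndex K * 6 := by
        calc (Nat.card (U₄.map π) * r₄) * 6 = Nat.card (U₄.map π) * (6 * r₄) := by ring
          _ = U₄.relIndex K * 6 := h
      exact (Nat.eq_of_mul_eq_mul_right (by norm_num) h').symm
    have hrel5 : U₅.relIndex K = Nat.card (U₅.map π) * r₅ := by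
      have h := hmaster U₅
      rw [hi₅, hK6'] at h
      have h' : (Nat.card (U₅.map π) * r₅) * 6 = U₅.relIndex K * 6 := by
        calc (Nat.card (U₅.map π) * r₅) * 6 = Nat.card (U₅.map π) * (6 * r₅) := by ring
          _ = U₅.relIndex K * 6 := h
      exact (Nat.eq_of_mul_eq_mul_right (by norm_num) h').symm
    have hcop2 : ∀ mj rj : ℕ, mj = 1 ∨ mj = 2 → Nat.Coprime r₂ rj →
        Nat.Coprime r₂ (mj * rj) := by
      intro mj rj hm hc
      rcases hm with h | h
      · rw [h, one_mul]; exact hc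
      · rw [h]; exact Nat.Coprime.mul_right (HSAux.odd_coprime_two ⟨kk, hkk⟩) hc
    have hCS3 : Disjoint ((π g₂) • ((U₂.map π : Subgroup (G ⧸ K)) : Set (G ⧸ K)))
        ((π g₃) • ((U₃.map π : Subgroup (G ⧸ K)) : Set (G ⧸ K))) := by
      rw [Set.disjoint_left]
      intro q hq1 hq2
      refine hfiber_L1 U₂ U₃ g₂ g₃ D23 ?_ q hq1 hq2
      rw [hrel2, hrel3]
      exact hcop2 _ _ hm3cases h23
    have hCS4 : Disjoint ((π g₂) • ((U₂.map π : Subgroup (G ⧸ K)) : Set (G ⧸ K)))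
        ((π g₄) • ((U₄.map π : Subgroup (G ⧸ K)) : Set (G ⧸ K))) := by
      rw [Set.disjoint_left]
      intro q hq1 hq2
      refine hfiber_L1 U₂ U₄ g₂ g₄ D24 ?_ q hq1 hq2
      rw [hrel2, hrel4]
      exact hcop2 _ _ hm4cases h24
    have hCS5 : Disjoint ((π g₂) • ((U₂.map π : Subgroup (G ⧸ K)) : Set (G ⧸ K)))
        ((π g₅) • ((U₅.map π : Subgroup (G ⧸ K)) : Set (G ⧸ K))) := by
      rw [Set.disjoint_left]
      intro q hq1 hq2
      refine hfiber_L1 U₂ U₅ g₂ g₅ D25 ?_ q hq1 hq2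
      rw [hrel2, hrel5]
      exact hcop2 _ _ hm5cases h25
    have hQ12 := HSAux.disjoint_q hKle D12
    have hQ13 := HSAux.disjoint_q hKle D13
    have hQ14 := HSAux.disjoint_q hKle D14
    have hQ15 := HSAux.disjoint_q hKle D15
    have hncF : ((π g₁) • ((U₁.map π : Subgroup (G ⧸ K)) : Set (G ⧸ K))).ncard = 2 := by
      rw [HSAux.ncard_coset, hm1]
    have hncC : ((π g₂) • ((U₂.map π : Subgroup (G ⧸ K)) : Set (G ⧸ K))).ncard = 2 := by
      rw [HSAux.ncard_coset, hm2]
    have hncU : (((π g₁) • ((U₁.map π : Subgroup (G ⧸ K)) : Set (G ⧸ K))) ∪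
        ((π g₂) • ((U₂.map π : Subgroup (G ⧸ K)) : Set (G ⧸ K)))).ncard = 4 := by
      rw [Set.ncard_union_eq hQ12 (Set.toFinite _) (Set.toFinite _), hncF, hncC]
    have hncA' : ((((π g₁) • ((U₁.map π : Subgroup (G ⧸ K)) : Set (G ⧸ K))) ∪
        ((π g₂) • ((U₂.map π : Subgroup (G ⧸ K)) : Set (G ⧸ K))))ᶜ).ncard = 2 := by
      rw [Set.compl_eq_univ_diff, Set.ncard_diff (Set.subset_univ _) (Set.toFinite _),
        Set.ncard_univ, hcard6, hncU]
    obtain ⟨x, y, hxy, hxyA'⟩ := Set.ncard_eq_two.mp hncA'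
    have hsub : ∀ (W : Subgroup G) (g : G),
        Disjoint ((π g₁) • ((U₁.map π : Subgroup (G ⧸ K)) : Set (G ⧸ K)))
          ((π g) • ((W.map π : Subgroup (G ⧸ K)) : Set (G ⧸ K))) →
        Disjoint ((π g₂) • ((U₂.map π : Subgroup (G ⧸ K)) : Set (G ⧸ K)))
          ((π g) • ((W.map π : Subgroup (G ⧸ K)) : Set (G ⧸ K))) →
        ((π g) • ((W.map π : Subgroup (G ⧸ K)) : Set (G ⧸ K))) ⊆ {x, y} := by
      intro W g hd1 hd2
      rw [← hxyA']
      intro q hq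
      simp only [Set.mem_compl_iff, Set.mem_union]
      push_neg
      exact ⟨Set.disjoint_right.mp hd1 hq, Set.disjoint_right.mp hd2 hq⟩
    have hsub3 := hsub U₃ g₃ hQ13 hCS3
    have hsub4 := hsub U₄ g₄ hQ14 hCS4
    have hsub5 := hsub U₅ g₅ hQ15 hCS5
    have hself3 : π g₃ ∈ (π g₃) • ((U₃.map π : Subgroup (G ⧸ K)) : Set (G ⧸ K)) :=
      HSAux.self_mem_coset _
    have hself4 : π g₄ ∈ (π g₄) • ((U₄.map π : Subgroup (G ⧸ K)) : Set (G ⧸ K)) :=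
      HSAux.self_mem_coset _
    have hself5 : π g₅ ∈ (π g₅) • ((U₅.map π : Subgroup (G ⧸ K)) : Set (G ⧸ K)) :=
      HSAux.self_mem_coset _
    have hmem3 : x ∈ (π g₃) • ((U₃.map π : Subgroup (G ⧸ K)) : Set (G ⧸ K)) ∨
        y ∈ (π g₃) • ((U₃.map π : Subgroup (G ⧸ K)) : Set (G ⧸ K)) := by
      rcases hsub3 hself3 with h | h
      · exact Or.inl (h ▸ hself3)
      · exact Or.inr ((Set.mem_singleton_iff.mp h) ▸ hself3)
    have hmem4 : x ∈ (π g₄) • ((U₄.map π : Subgroup (G ⧸ K)) : Set (G ⧸ K)) ∨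
        y ∈ (π g₄) • ((U₄.map π : Subgroup (G ⧸ K)) : Set (G ⧸ K)) := by
      rcases hsub4 hself4 with h | h
      · exact Or.inl (h ▸ hself4)
      · exact Or.inr ((Set.mem_singleton_iff.mp h) ▸ hself4)
    have hmem5 : x ∈ (π g₅) • ((U₅.map π : Subgroup (G ⧸ K)) : Set (G ⧸ K)) ∨
        y ∈ (π g₅) • ((U₅.map π : Subgroup (G ⧸ K)) : Set (G ⧸ K)) := by
      rcases hsub5 hself5 with h | h
      · exact Or.inl (h ▸ hself5)
      · exact Or.inr ((Set.mem_singleton_iff.mp h) ▸ hself5)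
    have hsh34 : ((x ∈ (π g₃) • ((U₃.map π : Subgroup (G ⧸ K)) : Set (G ⧸ K)) ∧
          x ∈ (π g₄) • ((U₄.map π : Subgroup (G ⧸ K)) : Set (G ⧸ K))) ∨
        (y ∈ (π g₃) • ((U₃.map π : Subgroup (G ⧸ K)) : Set (G ⧸ K)) ∧
          y ∈ (π g₄) • ((U₄.map π : Subgroup (G ⧸ K)) : Set (G ⧸ K)))) →
        Even (U₃.relIndex K) ∧ Even (U₄.relIndex K) := by
      intro h
      have hnc : ¬ Nat.Coprime (U₃.relIndex K) (U₄.relIndex K) := by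
        intro hcop
        rcases h with ⟨ha, hb⟩ | ⟨ha, hb⟩
        · exact hfiber_L1 U₃ U₄ g₃ g₄ D34 hcop x ha hb
        · exact hfiber_L1 U₃ U₄ g₃ g₄ D34 hcop y ha hb
      exact HSAux.evens_of_not_coprime hrel3 hrel4 hm3cases hm4cases h34 hnc
    have hsh35 : ((x ∈ (π g₃) • ((U₃.map π : Subgroup (G ⧸ K)) : Set (G ⧸ K)) ∧
          x ∈ (π g₅) • ((U₅.map π : Subgroup (G ⧸ K)) : Set (G ⧸ K))) ∨
        (y ∈ (π g₃) • ((U₃.map π : Subgroup (G ⧸ K)) : Set (G ⧸ K)) ∧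
          y ∈ (π g₅) • ((U₅.map π : Subgroup (G ⧸ K)) : Set (G ⧸ K)))) →
        Even (U₃.relIndex K) ∧ Even (U₅.relIndex K) := by
      intro h
      have hnc : ¬ Nat.Coprime (U₃.relIndex K) (U₅.relIndex K) := by
        intro hcop
        rcases h with ⟨ha, hb⟩ | ⟨ha, hb⟩
        · exact hfiber_L1 U₃ U₅ g₃ g₅ D35 hcop x ha hb
        · exact hfiber_L1 U₃ U₅ g₃ g₅ D35 hcop y ha hb
      exact HSAux.evens_of_not_coprime hrel3 hrel5 hm3cases hm5cases h35 hnc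
    have hsh45 : ((x ∈ (π g₄) • ((U₄.map π : Subgroup (G ⧸ K)) : Set (G ⧸ K)) ∧
          x ∈ (π g₅) • ((U₅.map π : Subgroup (G ⧸ K)) : Set (G ⧸ K))) ∨
        (y ∈ (π g₄) • ((U₄.map π : Subgroup (G ⧸ K)) : Set (G ⧸ K)) ∧
          y ∈ (π g₅) • ((U₅.map π : Subgroup (G ⧸ K)) : Set (G ⧸ K)))) →
        Even (U₄.relIndex K) ∧ Even (U₅.relIndex K) := by
      intro h
      have hnc : ¬ Nat.Coprime (U₄.relIndex K) (U₅.relIndex K) := by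
        intro hcop
        rcases h with ⟨ha, hb⟩ | ⟨ha, hb⟩
        · exact hfiber_L1 U₄ U₅ g₄ g₅ D45 hcop x ha hb
        · exact hfiber_L1 U₄ U₅ g₄ g₅ D45 hcop y ha hb
      exact HSAux.evens_of_not_coprime hrel4 hrel5 hm4cases hm5cases h45 hnc
    have hmm : ∀ (W : Subgroup G) (g : G) (rj : ℕ),
        ((π g) • ((W.map π : Subgroup (G ⧸ K)) : Set (G ⧸ K))) ⊆ {x, y} →
        π g ∈ (π g) • ((W.map π : Subgroup (G ⧸ K)) : Set (G ⧸ K)) →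
        W.relIndex K = Nat.card (W.map π) * rj →
        ((x ∈ (π g) • ((W.map π : Subgroup (G ⧸ K)) : Set (G ⧸ K)) ∧
          y ∈ (π g) • ((W.map π : Subgroup (G ⧸ K)) : Set (G ⧸ K))) ∨
         (Even (W.relIndex K) → Even rj)) := by
      intro W g rj hsubW hselfW hrelW
      by_cases hb : x ∈ (π g) • ((W.map π : Subgroup (G ⧸ K)) : Set (G ⧸ K)) ∧
          y ∈ (π g) • ((W.map π : Subgroup (G ⧸ K)) : Set (G ⧸ K))
      · exact Or.inl hb
      · right
        have hm1' : Nat.card (W.map π) = 1 := by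
          have hnc : ((π g) • ((W.map π : Subgroup (G ⧸ K)) : Set (G ⧸ K))).ncard =
              Nat.card (W.map π) := HSAux.ncard_coset _ _
          have hle1 : ((π g) • ((W.map π : Subgroup (G ⧸ K)) : Set (G ⧸ K))).ncard ≤ 1 := by
            rcases not_and_or.mp hb with hx' | hy'
            · have hsy : ((π g) • ((W.map π : Subgroup (G ⧸ K)) : Set (G ⧸ K))) ⊆ {y} := by
                intro q hq
                rcases hsubW hq with h | h
                · exact absurd (h ▸ hq) hx'
                · exact h
              calc ((π g) • ((W.map π : Subgroup (G ⧸ K)) : Set (G ⧸ K))).ncard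
                  ≤ ({y} : Set (G ⧸ K)).ncard := Set.ncard_le_ncard hsy (Set.toFinite _)
                _ = 1 := Set.ncard_singleton y
            · have hsy : ((π g) • ((W.map π : Subgroup (G ⧸ K)) : Set (G ⧸ K))) ⊆ {x} := by
                intro q hq
                rcases hsubW hq with h | h
                · exact h
                · exact absurd ((Set.mem_singleton_iff.mp h) ▸ hq) hy'
              calc ((π g) • ((W.map π : Subgroup (G ⧸ K)) : Set (G ⧸ K))).ncard
                  ≤ ({x} : Set (G ⧸ K)).ncard := Set.ncard_le_ncard hsy (Set.toFinite _)
                _ = 1 := Set.ncard_singleton x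
          have hge1 : 0 < ((π g) • ((W.map π : Subgroup (G ⧸ K)) : Set (G ⧸ K))).ncard :=
            (Set.ncard_pos (Set.toFinite _)).mpr ⟨π g, hselfW⟩
          omega
        intro he
        rwa [hrelW, hm1', one_mul] at he
    have hmm3 := hmm U₃ g₃ r₃ hsub3 hself3 hrel3
    have hmm4 := hmm U₄ g₄ r₄ hsub4 hself4 hrel4
    have hmm5 := hmm U₅ g₅ r₅ hsub5 hself5 hrel5
    have hbash := HSAux.bash_prop _ _ _ _ _ _ _ _ _ _ _ _
      hmem3 hmem4 hmem5 hsh34 hsh35 hsh45 hmm3 hmm4 hmm5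
      (HSAux.not_both_even h34) (HSAux.not_both_even h35) (HSAux.not_both_even h45)
    have hconc : ∀ z : G ⧸ K,
        z ∈ (π g₃) • ((U₃.map π : Subgroup (G ⧸ K)) : Set (G ⧸ K)) →
        z ∈ (π g₄) • ((U₄.map π : Subgroup (G ⧸ K)) : Set (G ⧸ K)) →
        z ∈ (π g₅) • ((U₅.map π : Subgroup (G ⧸ K)) : Set (G ⧸ K)) →
        Even (U₃.relIndex K) → Even (U₄.relIndex K) → Even (U₅.relIndex K) → False := by
      intro z hz3 hz4 hz5 hE3 hE4 hE5
      obtain ⟨u3, hu3⟩ := hE3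
      obtain ⟨u4, hu4⟩ := hE4
      obtain ⟨u5, hu5⟩ := hE5
      have hu3' : U₃.relIndex K = 2 * u3 := by omega
      have hu4' : U₄.relIndex K = 2 * u4 := by omega
      have hu5' : U₅.relIndex K = 2 * u5 := by omega
      have hd3 : u3 ∣ r₃ := HSAux.half_dvd hm3cases (by rw [← hrel3]; exact hu3')
      have hd4 : u4 ∣ r₄ := HSAux.half_dvd hm4cases (by rw [← hrel4]; exact hu4')
      have hd5 : u5 ∣ r₅ := HSAux.half_dvd hm5cases (by rw [← hrel5]; exact hu5')
      exact hfinal z hz3 hz4 hz5 u3 u4 u5 hu3' hu4' hu5'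
        (Nat.Coprime.coprime_dvd_left hd3 (Nat.Coprime.coprime_dvd_right hd4 h34))
        (Nat.Coprime.coprime_dvd_left hd3 (Nat.Coprime.coprime_dvd_right hd5 h35))
        (Nat.Coprime.coprime_dvd_left hd4 (Nat.Coprime.coprime_dvd_right hd5 h45))
    rcases hbash with ⟨ha3, ha4, ha5⟩ | ⟨hb3, hb4, hb5⟩
    · have hE34 := hsh34 (Or.inl ⟨ha3, ha4⟩)
      have hE35 := hsh35 (Or.inl ⟨ha3, ha5⟩)
      exact hconc x ha3 ha4 ha5 hE34.1 hE34.2 hE35.2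
    · have hE34 := hsh34 (Or.inr ⟨hb3, hb4⟩)
      have hE35 := hsh35 (Or.inr ⟨hb3, hb5⟩)
      exact hconc y hb3 hb4 hb5 hE34.1 hE34.2 hE35.2
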